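/- Let A be a finite-dimensional algebra over a field k and let φ be a k-algebra automorphism of A such that S ≅ S_φ for every simple right A-module S. Then P ≅ P_φ for every finitely generated projective right A-module P. -/

import Mathlib

universe u v w

section StablePrelude

variable {k : Type u} {A : Type v} [Field k] [Ring A] [Algebra k A]

/-- The right `A`-module `M` twisted by the algebra automorphism `φ`:
same underlying additive group, with right action `m ·_φ a = m · φ a`. -/
def Tw (_φ : A ≃ₐ[k] A) (M : Type w) : Type w := M

/-- The identity function, viewed as a map `M → Tw φ M`. -/
def Tw.of (φ : A ≃ₐ[k] A) {M : Type w} (m : M) : Tw φ M := m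

instance (φ : A ≃ₐ[k] A) (M : Type w) [inst : AddCommGroup M] : AddCommGroup (Tw φ M) := inst

instance (φ : A ≃ₐ[k] A) (M : Type w) [AddCommGroup M] [Module Aᵐᵒᵖ M] :
    Module Aᵐᵒᵖ (Tw φ M) :=
  Module.compHom M (RingHom.op φ.toRingEquiv.toRingHom)

/-- A right-module map `f : M → N` is also `A`-linear as a map `M_φ → N_φ`
(with the same underlying function). -/
def twMap (φ : A ≃ₐ[k] A) {M N : Type w} [AddCommGroup M] [Module Aᵐᵒᵖ M]
    [AddCommGroup N] [Module Aᵐᵒᵖ N] (f : M →ₗ[Aᵐᵒᵖ] N) :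
    Tw φ M →ₗ[Aᵐᵒᵖ] Tw φ N where
  toFun m := Tw.of φ (f m)
  map_add' := f.map_add
  map_smul' r m := f.map_smul (RingHom.op φ.toRingEquiv.toRingHom r) m

/-- `f` factors through a projective module. -/
def FactorsThroughProjective {R : Type*} [Ring R] {M N : Type w}
    [AddCommGroup M] [Module R M] [AddCommGroup N] [Module R N] (f : M →ₗ[R] N) : Prop :=
  ∃ (P : Type w) (_ : AddCommGroup P) (_ : Module R P),
    Module.Projective R P ∧ ∃ (g : M →ₗ[R] P) (h : P →ₗ[R] N), f = h ∘ₗ g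

/-- An automorphism `φ` of `A` is *stably inner* if restriction of scalars along `φ`
induces a functor on the stable category of finitely generated right `A`-modules that is
isomorphic to the identity functor: there is a family of maps `η_M : M → M_φ` that is
natural up to maps factoring through projectives and consists of stable isomorphisms. -/
def StablyInner (φ : A ≃ₐ[k] A) : Prop :=
  ∃ η : ∀ (M : Type v) (_ : AddCommGroup M) (_ : Module Aᵐᵒᵖ M) (_ : Module.Finite Aᵐᵒᵖ M),
      M →ₗ[Aᵐᵒᵖ] Tw φ M,
    (∀ (M : Type v) (iM : AddCommGroup M) (mM : Module Aᵐᵒᵖ M) (fM : Module.Finite Aᵐᵒᵖ M)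
        (N : Type v) (iN : AddCommGroup N) (mN : Module Aᵐᵒᵖ N) (fN : Module.Finite Aᵐᵒᵖ N)
        (f : M →ₗ[Aᵐᵒᵖ] N),
        FactorsThroughProjective (η N iN mN fN ∘ₗ f - twMap φ f ∘ₗ η M iM mM fM)) ∧
    (∀ (M : Type v) (iM : AddCommGroup M) (mM : Module Aᵐᵒᵖ M) (fM : Module.Finite Aᵐᵒᵖ M),
        ∃ ζ : Tw φ M →ₗ[Aᵐᵒᵖ] M,
          FactorsThroughProjective (ζ ∘ₗ η M iM mM fM - LinearMap.id) ∧
          FactorsThroughProjective (η M iM mM fM ∘ₗ ζ - LinearMap.id))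

end StablePrelude




/-! ### Twist auxiliary definitions -/

section Aux

variable {k : Type u} {A : Type v} [Field k] [Ring A] [Algebra k A]

/-- The identity function, viewed as a map `Tw φ M → M`. -/
def Tw.un (φ : A ≃ₐ[k] A) {M : Type w} (m : Tw φ M) : M := m

/-- The ring automorphism of `Aᵐᵒᵖ` induced by `φ`. -/
def twSigma (φ : A ≃ₐ[k] A) : Aᵐᵒᵖ ≃+* Aᵐᵒᵖ := RingEquiv.op φ.toRingEquiv

lemma tw_smul (φ : A ≃ₐ[k] A) {M : Type w} [AddCommGroup M] [Module Aᵐᵒᵖ M]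
    (r : Aᵐᵒᵖ) (m : Tw φ M) : Tw.un φ (r • m) = (twSigma φ) r • Tw.un φ m := rfl

lemma tw_smul' (φ : A ≃ₐ[k] A) {M : Type w} [AddCommGroup M] [Module Aᵐᵒᵖ M]
    (r : Aᵐᵒᵖ) (m : M) : Tw.of φ (r • m) = ((twSigma φ).symm r) • Tw.of φ m := by
  show Tw.of φ (r • m) = Tw.of φ ((twSigma φ) ((twSigma φ).symm r) • m)
  rw [RingEquiv.apply_symm_apply]

lemma twSigma_algebraMap (φ : A ≃ₐ[k] A) (c : k) :
    (twSigma φ) (algebraMap k Aᵐᵒᵖ c) = algebraMap k Aᵐᵒᵖ c := by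
  show MulOpposite.op (φ _) = _
  rw [MulOpposite.algebraMap_apply]
  exact congrArg MulOpposite.op (φ.commutes c)

/-- Twist of a linear equivalence. -/
def twEquiv (φ : A ≃ₐ[k] A) {M N : Type w} [AddCommGroup M] [Module Aᵐᵒᵖ M]
    [AddCommGroup N] [Module Aᵐᵒᵖ N] (e : M ≃ₗ[Aᵐᵒᵖ] N) :
    Tw φ M ≃ₗ[Aᵐᵒᵖ] Tw φ N :=
  LinearEquiv.ofLinear (twMap φ e.toLinearMap) (twMap φ e.symm.toLinearMap)
    (LinearMap.ext fun x => show Tw.of φ (e (e.symm (Tw.un φ x))) = x from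
      congrArg (Tw.of φ) (e.apply_symm_apply _))
    (LinearMap.ext fun x => show Tw.of φ (e.symm (e (Tw.un φ x))) = x from
      congrArg (Tw.of φ) (e.symm_apply_apply _))

/-- Twist commutes with binary products. -/
def twProd (φ : A ≃ₐ[k] A) {X Y : Type w} [AddCommGroup X] [Module Aᵐᵒᵖ X]
    [AddCommGroup Y] [Module Aᵐᵒᵖ Y] :
    (Tw φ X × Tw φ Y) ≃ₗ[Aᵐᵒᵖ] Tw φ (X × Y) where
  toFun p := Tw.of φ (Tw.un φ p.1, Tw.un φ p.2)
  invFun p := (Tw.of φ (Tw.un φ p).1, Tw.of φ (Tw.un φ p).2)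
  map_add' _ _ := rfl
  map_smul' _ _ := rfl
  left_inv _ := rfl
  right_inv _ := rfl

/-- Twist iso for subsingleton modules. -/
def twOfSubsingleton (φ : A ≃ₐ[k] A) {M : Type w} [AddCommGroup M] [Module Aᵐᵒᵖ M]
    [Subsingleton M] : M ≃ₗ[Aᵐᵒᵖ] Tw φ M where
  toFun m := Tw.of φ m
  invFun m := Tw.un φ m
  map_add' _ _ := rfl
  map_smul' _ _ := Subsingleton.elim (α := M) _ _
  left_inv _ := rfl
  right_inv _ := rfl

/-- Transport a submodule of `M` to a submodule of `Tw φ M`. -/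
def toTwSubmodule (φ : A ≃ₐ[k] A) {M : Type w} [AddCommGroup M] [Module Aᵐᵒᵖ M]
    (N : Submodule Aᵐᵒᵖ M) : Submodule Aᵐᵒᵖ (Tw φ M) where
  carrier := {x | Tw.un φ x ∈ N}
  add_mem' hx hy := N.add_mem hx hy
  zero_mem' := N.zero_mem
  smul_mem' r x hx := by
    show Tw.un φ (r • x) ∈ N
    rw [tw_smul]
    exact N.smul_mem _ hx

lemma mem_toTwSubmodule (φ : A ≃ₐ[k] A) {M : Type w} [AddCommGroup M] [Module Aᵐᵒᵖ M]
    (N : Submodule Aᵐᵒᵖ M) (x : Tw φ M) : x ∈ toTwSubmodule φ N ↔ Tw.un φ x ∈ N := Iff.rfl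

/-- Transport a submodule of `Tw φ M` to a submodule of `M`. -/
def unTwSubmodule (φ : A ≃ₐ[k] A) {M : Type w} [AddCommGroup M] [Module Aᵐᵒᵖ M]
    (N : Submodule Aᵐᵒᵖ (Tw φ M)) : Submodule Aᵐᵒᵖ M where
  carrier := {x | Tw.of φ x ∈ N}
  add_mem' hx hy := N.add_mem hx hy
  zero_mem' := N.zero_mem
  smul_mem' r x hx := by
    show Tw.of φ (r • x) ∈ N
    rw [tw_smul']
    exact N.smul_mem _ hx

lemma twFinite (φ : A ≃ₐ[k] A) {M : Type w} [AddCommGroup M] [Module Aᵐᵒᵖ M]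
    [Module.Finite Aᵐᵒᵖ M] : Module.Finite Aᵐᵒᵖ (Tw φ M) := by
  classical
  obtain ⟨s, hs⟩ := Module.Finite.fg_top (R := Aᵐᵒᵖ) (M := M)
  refine ⟨⟨s.image (Tw.of φ), ?_⟩⟩
  rw [eq_top_iff]
  intro x _
  have hx : Tw.un φ x ∈ Submodule.span Aᵐᵒᵖ (s : Set M) := hs ▸ Submodule.mem_top
  have hle : Submodule.span Aᵐᵒᵖ (s : Set M) ≤
      unTwSubmodule φ (Submodule.span Aᵐᵒᵖ ((s.image (Tw.of φ) : Finset (Tw φ M)) : Set (Tw φ M))) := by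
    refine Submodule.span_le.mpr fun y hy => ?_
    show Tw.of φ y ∈ _
    exact Submodule.subset_span (by
      simp only [Finset.coe_image, Set.mem_image, Finset.mem_coe]
      exact ⟨y, hy, rfl⟩)
  exact hle hx

end Aux

/-! ### Jacobson radical and Nakayama facts for noncommutative rings -/

section Jac

variable {R' : Type*} [Ring R']

/-- The Jacobson radical (of `⊥`) is closed under right multiplication, i.e. it is a
two-sided ideal, even though `Ideal` means left ideal. -/
lemma jacobson_bot_mul_mem {x : R'} (hx : x ∈ Ideal.jacobson (⊥ : Ideal R')) (r : R') :
    x * r ∈ Ideal.jacobson (⊥ : Ideal R') := by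
  rw [Ideal.jacobson, Submodule.mem_sInf]
  rintro m ⟨-, hm⟩
  haveI : IsSimpleModule R' (R' ⧸ m) := isSimpleModule_iff_isCoatom.mpr hm.out
  set f : R' →ₗ[R'] R' ⧸ m := m.mkQ.comp (LinearMap.toSpanSingleton R' R' r) with hf
  have hfx : f x = Submodule.Quotient.mk (x * r) := by
    simp [hf, LinearMap.toSpanSingleton_apply, smul_eq_mul]
  rcases eq_or_ne f 0 with h0 | h0
  · have : f x = 0 := by rw [h0]; rfl
    rw [hfx] at this
    exact (Submodule.Quotient.mk_eq_zero m).mp this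
  · have hsurj : Function.Surjective f := LinearMap.surjective_of_ne_zero h0
    have hco : IsCoatom (LinearMap.ker f) := LinearMap.isCoatom_ker_of_surjective hsurj
    have hxker : x ∈ LinearMap.ker f := by
      have hle : Ideal.jacobson (⊥ : Ideal R') ≤ LinearMap.ker f :=
        sInf_le ⟨bot_le, ⟨hco⟩⟩
      exact hle hx
    rw [LinearMap.mem_ker, hfx] at hxker
    exact (Submodule.Quotient.mk_eq_zero m).mp hxker

/-- Elements of the Jacobson radical have a "left quasi-inverse": `z * (1 - j) = 1`. -/
lemma exists_left_inv_one_sub {j : R'} (hj : j ∈ Ideal.jacobson (⊥ : Ideal R')) :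
    ∃ z : R', z * (1 - j) = 1 := by
  obtain ⟨z, hz⟩ := Ideal.mem_jacobson_iff.mp hj (-1)
  rw [Ideal.mem_bot] at hz
  refine ⟨z, ?_⟩
  have h : z * (1 - j) = z * -1 * j + z := by noncomm_ring
  rw [h, ← sub_eq_zero]
  exact hz

lemma ringEquiv_jacobson_bot_mem (e : R' ≃+* R') {x : R'}
    (hx : x ∈ Ideal.jacobson (⊥ : Ideal R')) : e x ∈ Ideal.jacobson (⊥ : Ideal R') := by
  rw [Ideal.mem_jacobson_iff] at hx ⊢
  intro y
  obtain ⟨z, hz⟩ := hx (e.symm y)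
  rw [Ideal.mem_bot] at hz
  refine ⟨e z, ?_⟩
  rw [Ideal.mem_bot]
  have := congrArg e hz
  simpa [map_mul, map_add, map_sub, map_one] using this

variable {M : Type*} [AddCommGroup M] [Module R' M]

/-- Nakayama for spans of finite sets, over a possibly noncommutative ring. -/
lemma nak_span (s : Finset M)
    (h : Submodule.span R' (s : Set M) ≤
      Ideal.jacobson (⊥ : Ideal R') • Submodule.span R' (s : Set M)) :
    Submodule.span R' (s : Set M) = ⊥ := by
  classical
  induction s using Finset.induction_on with
  | empty => simp
  | @insert x s hxs ih =>
    set J := Ideal.jacobson (⊥ : Ideal R') with hJdef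
    rw [Finset.coe_insert] at h ⊢
    have hx : x ∈ J • Submodule.span R' (insert x (s : Set M)) :=
      h (Submodule.subset_span (by simp))
    rw [Submodule.span_insert, Submodule.smul_sup] at hx
    obtain ⟨z, hz, m, hm, hzm⟩ := Submodule.mem_sup.mp hx
    have hzx : ∃ j ∈ J, z = j • x := by
      refine Submodule.smul_induction_on hz (fun r hr n hn => ?_) (fun a b ha hb => ?_)
      · obtain ⟨a, rfl⟩ := Submodule.mem_span_singleton.mp hn
        exact ⟨r * a, jacobson_bot_mul_mem hr a, (mul_smul r a x).symm⟩
      · obtain ⟨j1, hj1, rfl⟩ := ha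
        obtain ⟨j2, hj2, rfl⟩ := hb
        exact ⟨j1 + j2, J.add_mem hj1 hj2, (add_smul j1 j2 x).symm⟩
    obtain ⟨j, hj, rfl⟩ := hzx
    have hm' : m ∈ Submodule.span R' (s : Set M) := Submodule.smul_le_right hm
    have hxmem : x ∈ Submodule.span R' (s : Set M) := by
      obtain ⟨z, hz⟩ := exists_left_inv_one_sub hj
      have hm2 : m = x - j • x := eq_sub_of_add_eq' hzm
      have h1 : (1 - j) • x = m := by
        rw [sub_smul, one_smul, hm2]
      have h2 : x = z • ((1 - j) • x) := by
        rw [← mul_smul, hz, one_smul]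
      rw [h2, h1]
      exact Submodule.smul_mem _ _ hm'
    have hspan : Submodule.span R' (insert x (s : Set M)) = Submodule.span R' (s : Set M) :=
      Submodule.span_insert_eq_span hxmem
    rw [hspan] at h ⊢
    exact ih h

/-- Nakayama: a f.g. submodule contained in `J • itself` is zero. -/
lemma nak_fg {N : Submodule R' M} (hfg : N.FG)
    (h : N ≤ Ideal.jacobson (⊥ : Ideal R') • N) : N = ⊥ := by
  obtain ⟨s, rfl⟩ := hfg
  exact nak_span s h

/-- Nakayama: surjectivity criterion. -/
lemma nak_sup [Module.Finite R' M] {N : Submodule R' M}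
    (h : N ⊔ Ideal.jacobson (⊥ : Ideal R') • (⊤ : Submodule R' M) = ⊤) : N = ⊤ := by
  set J := Ideal.jacobson (⊥ : Ideal R') with hJdef
  have h1 : (⊤ : Submodule R' (M ⧸ N)) ≤ J • ⊤ := by
    have hmap := congrArg (Submodule.map N.mkQ) h
    rw [Submodule.map_sup, Submodule.map_smul'', Submodule.map_top, Submodule.range_mkQ] at hmap
    have h2 : Submodule.map N.mkQ N = ⊥ := by
      rw [eq_bot_iff]
      refine Submodule.map_le_iff_le_comap.mpr ?_
      rw [Submodule.comap_bot, Submodule.ker_mkQ]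
    rw [h2, bot_sup_eq] at hmap
    exact hmap.ge
  have h3 : (⊤ : Submodule R' (M ⧸ N)) = ⊥ :=
    nak_fg (Module.Finite.fg_top) h1
  have h4 : Subsingleton (M ⧸ N) := by
    constructor
    intro a b
    have ha : a ∈ (⊥ : Submodule R' (M ⧸ N)) := h3 ▸ Submodule.mem_top
    have hb : b ∈ (⊥ : Submodule R' (M ⧸ N)) := h3 ▸ Submodule.mem_top
    rw [Submodule.mem_bot] at ha hb
    rw [ha, hb]
  exact Submodule.Quotient.subsingleton_iff.mp h4

/-- In an artinian ring, the Jacobson radical is a finite intersection of maximal left ideals. -/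
lemma jacobson_eq_finset_inf [IsArtinianRing R'] :
    ∃ s : Finset (Ideal R'), (∀ m ∈ s, IsCoatom m) ∧
      Ideal.jacobson (⊥ : Ideal R') = s.inf id := by
  classical
  set 𝒮 : Set (Ideal R') :=
    {I | ∃ s : Finset (Ideal R'), (∀ m ∈ s, IsCoatom m) ∧ I = s.inf id} with h𝒮
  have hne : 𝒮.Nonempty := ⟨⊤, ∅, by simp, by simp⟩
  obtain ⟨I₀, ⟨s₀, hs₀, rfl⟩, hmin⟩ := IsArtinian.set_has_minimal 𝒮 hne
  have hle : ∀ m : Ideal R', IsCoatom m → s₀.inf id ≤ m := by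
    intro m hm
    by_contra hnle
    have hmem : (insert m s₀).inf id ∈ 𝒮 := ⟨insert m s₀, by
        intro i hi
        rcases Finset.mem_insert.mp hi with rfl | hi
        · exact hm
        · exact hs₀ i hi, rfl⟩
    refine hmin _ hmem ?_
    rw [Finset.inf_insert]
    refine lt_of_le_of_ne inf_le_right ?_
    intro heq
    exact hnle (heq ▸ inf_le_left : s₀.inf id ≤ m)
  refine ⟨s₀, hs₀, le_antisymm ?_ ?_⟩
  · refine Finset.le_inf fun m hm => ?_
    exact sInf_le ⟨bot_le, ⟨(hs₀ m hm)⟩⟩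
  · refine le_sInf fun m hm => ?_
    exact hle m hm.2.out

/-- In an artinian ring, `R ⧸ J` is a semisimple module. -/
lemma semisimple_quotient_jacobson [IsArtinianRing R'] :
    IsSemisimpleModule R' (R' ⧸ Ideal.jacobson (⊥ : Ideal R')) := by
  classical
  obtain ⟨s, hs, hJ⟩ := jacobson_eq_finset_inf (R' := R')
  haveI hsimp : ∀ m : s, IsSimpleModule R' (R' ⧸ (m : Ideal R')) := fun m =>
    isSimpleModule_iff_isCoatom.mpr (hs m m.2)
  haveI hF : IsSemisimpleModule R' (∀ m : s, R' ⧸ (m : Ideal R')) := by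
    refine isSemisimpleModule_of_isSemisimpleModule_submodule'
      (p := fun i : s => LinearMap.range (LinearMap.single R' (fun j : s => R' ⧸ (j : Ideal R')) i))
      (fun i => ?_) ?_
    · have hinj : Function.Injective
          (LinearMap.single R' (fun j : s => R' ⧸ (j : Ideal R')) i) := fun a b hab => by
        simpa using congrFun hab i
      exact IsSemisimpleModule.congr (LinearEquiv.ofInjective _ hinj).symm
    · simp_rw [LinearMap.range_eq_map, Submodule.iSup_map_single, Submodule.pi_top]
  set J := Ideal.jacobson (⊥ : Ideal R') with hJdef
  let f : (R' ⧸ J) →ₗ[R'] (∀ m : s, R' ⧸ (m : Ideal R')) :=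
    LinearMap.pi fun m => Submodule.mapQ J (m : Ideal R') LinearMap.id
      (by rw [hJ]; exact Finset.inf_le m.2)
  have hf : Function.Injective f := by
    rw [← LinearMap.ker_eq_bot, eq_bot_iff]
    intro x hx
    obtain ⟨r, rfl⟩ := Submodule.mkQ_surjective J x
    rw [LinearMap.mem_ker] at hx
    have hr : ∀ m : s, r ∈ (m : Ideal R') := by
      intro m
      have hcm := congrFun hx m
      simp only [f, LinearMap.pi_apply, Pi.zero_apply] at hcm
      rw [Submodule.mkQ_apply, Submodule.mapQ_apply, LinearMap.id_apply] at hcm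
      exact (Submodule.Quotient.mk_eq_zero _).mp hcm
    have : r ∈ J := by
      rw [hJ, Submodule.mem_finsetInf]
      intro i hi
      exact hr ⟨i, hi⟩
    simpa [Submodule.mem_bot, Submodule.Quotient.mk_eq_zero] using
      (Submodule.Quotient.mk_eq_zero J).mpr this
  exact IsSemisimpleModule.congr (M := ↥(LinearMap.range f)) (LinearEquiv.ofInjective f hf)

/-- A f.g. module killed by the Jacobson radical over an artinian ring is semisimple. -/
lemma semisimple_of_jacobson_smul_eq_bot [IsArtinianRing R'] [Module.Finite R' M]
    (h : Ideal.jacobson (⊥ : Ideal R') • (⊤ : Submodule R' M) = ⊥) :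
    IsSemisimpleModule R' M := by
  classical
  set J := Ideal.jacobson (⊥ : Ideal R') with hJdef
  obtain ⟨t, ht⟩ := Module.Finite.fg_top (R := R') (M := M)
  haveI := semisimple_quotient_jacobson (R' := R')
  have hker : ∀ x : M, (J : Submodule R' R') ≤ LinearMap.ker (LinearMap.toSpanSingleton R' M x) := by
    intro x j hj
    rw [LinearMap.mem_ker, LinearMap.toSpanSingleton_apply]
    have : j • x ∈ J • (⊤ : Submodule R' M) := Submodule.smul_mem_smul hj Submodule.mem_top
    rw [h] at this
    exact (Submodule.mem_bot R').mp this
  refine isSemisimpleModule_of_isSemisimpleModule_submodule (s := (t : Set M))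
    (p := fun x => LinearMap.range (Submodule.liftQ J (LinearMap.toSpanSingleton R' M x) (hker x)))
    (fun x _ => IsSemisimpleModule.range _) ?_
  apply le_antisymm le_top
  rw [← ht]
  refine Submodule.span_le.mpr fun x hx => ?_
  have hxp : x ∈ LinearMap.range
      (Submodule.liftQ J (LinearMap.toSpanSingleton R' M x) (hker x)) := by
    refine ⟨Submodule.Quotient.mk 1, ?_⟩
    rw [Submodule.liftQ_apply, LinearMap.toSpanSingleton_apply, one_smul]
  exact Submodule.mem_iSup_of_mem x (Submodule.mem_iSup_of_mem hx hxp)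

/-- A f.g. semisimple module is a finite sup of simple submodules. -/
lemma exists_finite_simple_sup [IsSemisimpleModule R' M] [Module.Finite R' M] :
    ∃ (n : ℕ) (f : Fin n → Submodule R' M),
      (∀ i, IsSimpleModule R' (f i)) ∧ (⨆ i, f i) = ⊤ := by
  classical
  have h1 := IsSemisimpleModule.sSup_simples_eq_top R' M
  obtain ⟨t, ht⟩ := Module.Finite.fg_top (R := R') (M := M)
  have hc : IsCompactElement (⊤ : Submodule R' M) := by
    rw [← ht]
    exact Submodule.finset_span_isCompactElement t
  obtain ⟨u, hsub, hle⟩ := (CompleteLattice.isCompactElement_iff_exists_le_sSup_of_le_sSup (k := (⊤ : Submodule R' M))).mp hc {m : Submodule R' M | IsSimpleModule R' m} h1.ge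
  refine ⟨u.card, fun i => ((u.equivFin.symm i : u) : Submodule R' M), fun i => ?_, ?_⟩
  · exact hsub (u.equivFin.symm i).2
  · apply le_antisymm le_top
    refine le_trans hle (Finset.sup_le fun m hm => ?_)
    have h3 := le_iSup (fun i => ((u.equivFin.symm i : u) : Submodule R' M)) (u.equivFin ⟨m, hm⟩)
    rw [Equiv.symm_apply_apply] at h3
    simpa using h3

end Jac

/-! ### Twist isomorphism for semisimple modules -/

section SS

variable {k : Type u} {A : Type v} [Field k] [Ring A] [Algebra k A]

lemma fin_iSup_split {n : ℕ} {L : Type*} [CompleteLattice L] (f : Fin (n + 1) → L) :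
    (⨆ i, f i) = f 0 ⊔ ⨆ i : Fin n, f i.succ := by
  apply le_antisymm
  · exact iSup_le fun i => Fin.cases le_sup_left
      (fun j => le_trans (le_iSup (fun j : Fin n => f j.succ) j) le_sup_right) i
  · exact sup_le (le_iSup f 0) (iSup_le fun j => le_iSup f j.succ)

lemma key_ss (φ : A ≃ₐ[k] A)
    (hsimple : ∀ (S : Type v) (iS : AddCommGroup S) (mS : Module Aᵐᵒᵖ S),
      IsSimpleModule Aᵐᵒᵖ S → Nonempty (S ≃ₗ[Aᵐᵒᵖ] Tw φ S)) :
    ∀ (n : ℕ) (M : Type v) (iM : AddCommGroup M) (mM : Module Aᵐᵒᵖ M)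
      (f : Fin n → Submodule Aᵐᵒᵖ M), (∀ i, IsSimpleModule Aᵐᵒᵖ (f i)) → (⨆ i, f i) = ⊤ →
      Nonempty (M ≃ₗ[Aᵐᵒᵖ] Tw φ M) := by
  intro n
  induction n with
  | zero =>
    intro M iM mM f _ htop
    rw [iSup_of_empty] at htop
    haveI : Subsingleton M := by
      constructor
      intro a b
      have ha : a ∈ (⊥ : Submodule Aᵐᵒᵖ M) := htop ▸ Submodule.mem_top
      have hb : b ∈ (⊥ : Submodule Aᵐᵒᵖ M) := htop ▸ Submodule.mem_top
      rw [Submodule.mem_bot] at ha hb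
      rw [ha, hb]
    exact ⟨twOfSubsingleton φ⟩
  | succ n ih =>
    intro M iM mM f hsimp htop
    rw [fin_iSup_split f] at htop
    by_cases hle : f 0 ≤ ⨆ i : Fin n, f (i.succ)
    · exact ih M iM mM (fun i => f i.succ) (fun i => hsimp _)
        (by rw [sup_eq_right.mpr hle] at htop; exact htop)
    · set N := ⨆ i : Fin n, f (i.succ) with hN
      haveI hS0 := hsimp 0
      have hat : IsAtom (f 0) := IsSimpleModule.isAtom
      have hdisj : f 0 ⊓ N = ⊥ := by
        rcases lt_or_eq_of_le (inf_le_left : f 0 ⊓ N ≤ f 0) with hlt | heq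
        · exact hat.2 _ hlt
        · exact absurd (heq ▸ inf_le_right : f 0 ≤ N) hle
      have hcompl : IsCompl (f 0) N :=
        ⟨disjoint_iff.mpr hdisj, codisjoint_iff.mpr htop⟩
      have hfle : ∀ i : Fin n, f i.succ ≤ N := fun i => le_iSup (fun j : Fin n => f j.succ) i
      have hNsimple : ∀ i : Fin n,
          IsSimpleModule Aᵐᵒᵖ (Submodule.comap N.subtype (f i.succ)) := fun i => by
        haveI := hsimp i.succ
        exact IsSimpleModule.congr (Submodule.comapSubtypeEquivOfLe (hfle i))
      have hNtop : (⨆ i : Fin n, Submodule.comap N.subtype (f i.succ)) = ⊤ := by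
        apply Submodule.map_injective_of_injective N.injective_subtype
        rw [Submodule.map_iSup, Submodule.map_top, Submodule.range_subtype]
        have heq : ∀ i : Fin n,
            Submodule.map N.subtype (Submodule.comap N.subtype (f i.succ)) = f i.succ := by
          intro i
          rw [Submodule.map_comap_subtype]
          exact inf_eq_right.mpr (hfle i)
        simp_rw [heq]
        exact hN.symm
      obtain ⟨eN⟩ := ih (↥N) inferInstance inferInstance _ hNsimple hNtop
      obtain ⟨eS⟩ := hsimple (↥(f 0)) inferInstance inferInstance (hsimp 0)
      let eM : (↥(f 0) × ↥N) ≃ₗ[Aᵐᵒᵖ] M := Submodule.prodEquivOfIsCompl _ _ hcompl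
      exact ⟨eM.symm ≪≫ₗ (eS.prodCongr eN) ≪≫ₗ twProd φ ≪≫ₗ twEquiv φ eM⟩

end SS


/-! ### The main theorem -/

theorem projective_twist_iso_of_simple_twist_iso'
    {k : Type u} {A : Type v} [Field k] [Ring A] [Algebra k A] [FiniteDimensional k A]
    (φ : A ≃ₐ[k] A)
    (hsimple : ∀ (S : Type v) (iS : AddCommGroup S) (mS : Module Aᵐᵒᵖ S),
      IsSimpleModule Aᵐᵒᵖ S → Nonempty (S ≃ₗ[Aᵐᵒᵖ] Tw φ S))
    (P : Type v) [AddCommGroup P] [Module Aᵐᵒᵖ P] [Module.Finite Aᵐᵒᵖ P]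
    (hP : Module.Projective Aᵐᵒᵖ P) :
    Nonempty (P ≃ₗ[Aᵐᵒᵖ] Tw φ P) := by
  classical
  haveI hfdop : FiniteDimensional k Aᵐᵒᵖ :=
    Module.Finite.equiv (MulOpposite.opLinearEquiv k : A ≃ₗ[k] Aᵐᵒᵖ)
  haveI : IsArtinianRing Aᵐᵒᵖ := isArtinian_of_tower k inferInstance
  set rad : Submodule Aᵐᵒᵖ P := Ideal.jacobson (⊥ : Ideal Aᵐᵒᵖ) • ⊤ with hrad
  haveI hfinT : Module.Finite Aᵐᵒᵖ (P ⧸ rad) :=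
    Module.Finite.of_surjective rad.mkQ (Submodule.mkQ_surjective rad)
  have hkill : Ideal.jacobson (⊥ : Ideal Aᵐᵒᵖ) • (⊤ : Submodule Aᵐᵒᵖ (P ⧸ rad)) = ⊥ := by
    have hmap := Submodule.map_smul'' (Ideal.jacobson (⊥ : Ideal Aᵐᵒᵖ))
      (⊤ : Submodule Aᵐᵒᵖ P) rad.mkQ
    rw [Submodule.map_top, Submodule.range_mkQ] at hmap
    rw [← hmap, eq_bot_iff]
    refine Submodule.map_le_iff_le_comap.mpr ?_
    rw [Submodule.comap_bot, Submodule.ker_mkQ]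
  haveI hss : IsSemisimpleModule Aᵐᵒᵖ (P ⧸ rad) := semisimple_of_jacobson_smul_eq_bot hkill
  obtain ⟨n, fam, hf1, hf2⟩ := exists_finite_simple_sup (R' := Aᵐᵒᵖ) (M := P ⧸ rad)
  obtain ⟨θ⟩ := key_ss φ hsimple n (P ⧸ rad) inferInstance inferInstance fam hf1 hf2
  set rad' : Submodule Aᵐᵒᵖ (Tw φ P) := Ideal.jacobson (⊥ : Ideal Aᵐᵒᵖ) • ⊤ with hrad'
  have hradeq : rad' = toTwSubmodule φ rad := by
    apply le_antisymm
    · refine Submodule.smul_le.mpr fun r hr mm _ => ?_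
      show Tw.un φ (r • mm) ∈ rad
      rw [tw_smul]
      exact Submodule.smul_mem_smul (ringEquiv_jacobson_bot_mem (twSigma φ) hr) Submodule.mem_top
    · intro x hx
      rw [mem_toTwSubmodule] at hx
      have key : ∀ y : P, y ∈ rad → Tw.of φ y ∈ rad' := by
        intro y hy
        refine Submodule.smul_induction_on hy (fun r hr mm _ => ?_) (fun a b ha hb => ?_)
        · rw [tw_smul']
          exact Submodule.smul_mem_smul
            (ringEquiv_jacobson_bot_mem (twSigma φ).symm hr) Submodule.mem_top
        · exact rad'.add_mem ha hb
      exact key (Tw.un φ x) hx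
  set g₀ : Tw φ P →ₗ[Aᵐᵒᵖ] Tw φ (P ⧸ rad) := twMap φ rad.mkQ with hg₀
  have hker : ∀ x : Tw φ P, g₀ x = 0 ↔ x ∈ rad' := by
    intro x
    rw [hradeq, mem_toTwSubmodule]
    show Tw.of φ (rad.mkQ (Tw.un φ x)) = 0 ↔ _
    constructor
    · intro hzero
      have h0 : rad.mkQ (Tw.un φ x) = 0 := hzero
      rwa [Submodule.mkQ_apply, Submodule.Quotient.mk_eq_zero] at h0
    · intro hmem
      have h0 : rad.mkQ (Tw.un φ x) = 0 := by
        rwa [Submodule.mkQ_apply, Submodule.Quotient.mk_eq_zero]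
      show Tw.of φ (rad.mkQ (Tw.un φ x)) = 0
      rw [h0]; rfl
  have hle1 : rad' ≤ LinearMap.ker g₀ := fun x hx => LinearMap.mem_ker.mpr ((hker x).mpr hx)
  set ebar : (Tw φ P ⧸ rad') →ₗ[Aᵐᵒᵖ] Tw φ (P ⧸ rad) := Submodule.liftQ rad' g₀ hle1 with hebar
  have hebij : Function.Bijective ebar := by
    constructor
    · rw [← LinearMap.ker_eq_bot, Submodule.ker_liftQ_eq_bot]
      exact fun x hx => (hker x).mp (LinearMap.mem_ker.mp hx)
    · intro zz
      obtain ⟨y, hy⟩ := Submodule.mkQ_surjective rad (Tw.un φ zz)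
      refine ⟨Submodule.Quotient.mk (Tw.of φ y), ?_⟩
      show Tw.of φ (rad.mkQ y) = zz
      rw [show rad.mkQ y = Tw.un φ zz from hy]
      rfl
  let eQ : (Tw φ P ⧸ rad') ≃ₗ[Aᵐᵒᵖ] Tw φ (P ⧸ rad) := LinearEquiv.ofBijective ebar hebij
  haveI := hP
  obtain ⟨fhat, hfhat⟩ := Module.projective_lifting_property rad'.mkQ
    ((eQ.symm.toLinearMap.comp θ.toLinearMap).comp rad.mkQ) (Submodule.mkQ_surjective rad')
  have hcompsurj : Function.Surjective (rad'.mkQ.comp fhat) := by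
    rw [hfhat]
    exact eQ.symm.surjective.comp (θ.surjective.comp (Submodule.mkQ_surjective rad))
  have hrange : LinearMap.range fhat ⊔ rad' = ⊤ := by
    rw [eq_top_iff]
    intro x _
    obtain ⟨p, hp⟩ := hcompsurj (rad'.mkQ x)
    have hmem : x - fhat p ∈ rad' := by
      rw [← Submodule.ker_mkQ rad', LinearMap.mem_ker, map_sub,
        show rad'.mkQ (fhat p) = rad'.mkQ x from hp, sub_self]
    have hxeq : x = fhat p + (x - fhat p) := by abel
    rw [hxeq]
    exact Submodule.add_mem_sup (LinearMap.mem_range_self fhat p) hmem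
  haveI : Module.Finite Aᵐᵒᵖ (Tw φ P) := twFinite φ
  have hsurj : LinearMap.range fhat = ⊤ := nak_sup hrange
  have hsurjf : Function.Surjective fhat := LinearMap.range_eq_top.mp hsurj
  -- injectivity via k-dimension count
  letI instkP : Module k P := Module.compHom P (algebraMap k Aᵐᵒᵖ)
  haveI : IsScalarTower k Aᵐᵒᵖ P := ⟨fun c r m => by
    show (c • r) • m = algebraMap k Aᵐᵒᵖ c • (r • m)
    rw [Algebra.smul_def, mul_smul]⟩
  haveI : Module.Finite k P := Module.Finite.trans Aᵐᵒᵖ P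
  let fk : P →ₗ[k] P :=
    { toFun := fun p => Tw.un φ (fhat p)
      map_add' := fun a b => congrArg (Tw.un φ) (fhat.map_add a b)
      map_smul' := fun c m => by
        show Tw.un φ (fhat (algebraMap k Aᵐᵒᵖ c • m)) = algebraMap k Aᵐᵒᵖ c • Tw.un φ (fhat m)
        rw [fhat.map_smul, tw_smul, twSigma_algebraMap] }
  have hfk_surj : Function.Surjective fk := fun y =>
    (hsurjf (Tw.of φ y)).imp fun p hp => congrArg (Tw.un φ) hp
  have hfk_inj : Function.Injective fk :=
    (LinearMap.injective_iff_surjective (f := fk)).mpr hfk_surj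
  have hinj : Function.Injective fhat := fun a b hab => hfk_inj (congrArg (Tw.un φ) hab)
  exact ⟨LinearEquiv.ofBijective fhat ⟨hinj, hsurjf⟩⟩


/-- If `φ` is an automorphism of a finite-dimensional algebra `A` such that
`S ≅ S_φ` for every simple right `A`-module `S`, then `P ≅ P_φ` for every finitely
generated projective right `A`-module `P`. -/
theorem projective_twist_iso_of_simple_twist_iso
    {k : Type u} {A : Type v} [Field k] [Ring A] [Algebra k A] [FiniteDimensional k A]
    (φ : A ≃ₐ[k] A)
    (hsimple : ∀ (S : Type v) (iS : AddCommGroup S) (mS : Module Aᵐᵒᵖ S),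
      IsSimpleModule Aᵐᵒᵖ S → Nonempty (S ≃ₗ[Aᵐᵒᵖ] Tw φ S))
    (P : Type v) [AddCommGroup P] [Module Aᵐᵒᵖ P] [Module.Finite Aᵐᵒᵖ P]
    (hP : Module.Projective Aᵐᵒᵖ P) :
    Nonempty (P ≃ₗ[Aᵐᵒᵖ] Tw φ P) :=
  projective_twist_iso_of_simple_twist_iso' φ hsimple P hP
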